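/- Let p₁, p₂, p₃ be distinct primes, each congruent to 7 modulo 8, with (−p₁/p₂) = (−p₂/p₃) = −1 and (−p₁/p₃) = 1. Let (a, b) be the fundamental solution of the Pell equation x² − p₁p₂p₃·y² = 1. Then there exist integers b₁, b₂ with b = b₁·b₂, a + 1 = b₁², and a − 1 = p₁p₂p₃·b₂²; consequently b₁² − p₁p₂p₃·b₂² = 2 and 2·(a + b·√(p₁p₂p₃)) = (b₁ + b₂·√(p₁p₂p₃))². -/

import Mathlib

/-- `(a, b)` is the fundamental solution of the Pell equation `x² − D·y² = 1`:
the solution in positive integers with minimal `a`. -/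
def IsFundamentalPellSolution (D a b : ℤ) : Prop :=
  0 < a ∧ 0 < b ∧ a ^ 2 - D * b ^ 2 = 1 ∧
    ∀ a' b' : ℤ, 0 < a' → 0 < b' → a' ^ 2 - D * b' ^ 2 = 1 → a ≤ a'

namespace Pell8Aux

lemma leg_neg_one {q : ℕ} [Fact q.Prime] (h : q % 8 = 7) : legendreSym q (-1) = -1 := by
  rw [legendreSym.at_neg_one (by omega : q ≠ 2)]
  exact ZMod.χ₄_nat_three_mod_four (by omega)

lemma leg_two {q : ℕ} [Fact q.Prime] (h : q % 8 = 7) : legendreSym q 2 = 1 := by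
  rw [legendreSym.at_two (by omega : q ≠ 2), ZMod.χ₈_nat_mod_eight, h]
  decide

lemma leg_congr {q : ℕ} [Fact q.Prime] {x y : ℤ} (h : (x : ZMod q) = (y : ZMod q)) :
    legendreSym q x = legendreSym q y := by
  simp only [legendreSym, h]

lemma legA {q : ℕ} [Fact q.Prime] {r t s u c : ℤ} (hq : q % 8 = 7)
    (heq : r * s ^ 2 - t * u ^ 2 = c) (hc : c = 1 ∨ c = 2)
    (ht : (q : ℤ) ∣ t) (hs : ¬(q : ℤ) ∣ s) :
    legendreSym q r = 1 := by
  have hs0 : ((s : ZMod q)) ≠ 0 := by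
    rwa [Ne, ZMod.intCast_zmod_eq_zero_iff_dvd]
  have key : legendreSym q (r * s ^ 2) = legendreSym q c := by
    apply leg_congr
    obtain ⟨t', rfl⟩ := ht
    have h2 : r * s ^ 2 = c + (q * t') * u ^ 2 := by linarith
    rw [h2]
    push_cast
    simp [ZMod.natCast_self]
  rw [legendreSym.mul, legendreSym.sq_one' (p := q) hs0, mul_one] at key
  rcases hc with rfl | rfl
  · rwa [legendreSym.at_one] at key
  · rwa [leg_two hq] at key

lemma legB {q : ℕ} [Fact q.Prime] {r t s u c : ℤ} (hq : q % 8 = 7)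
    (heq : r * s ^ 2 - t * u ^ 2 = c) (hc : c = 1 ∨ c = 2)
    (hr : (q : ℤ) ∣ r) (hu : ¬(q : ℤ) ∣ u) :
    legendreSym q (-t) = 1 :=
  legA hq (by linarith : (-t) * u ^ 2 - (-r) * s ^ 2 = c) hc (hr.neg_right) hu

lemma leg_flip {p q : ℕ} [Fact p.Prime] [Fact q.Prime] (hp : p % 8 = 7) (hq : q % 8 = 7) :
    legendreSym q p = -legendreSym p q :=
  legendreSym.quadratic_reciprocity_three_mod_four (by omega) (by omega)

lemma leg_neg {p : ℕ} {q : ℕ} [Fact q.Prime] (hq : q % 8 = 7) :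
    legendreSym q (-(p : ℤ)) = -legendreSym q p := by
  rw [show -(p : ℤ) = -1 * p by ring, legendreSym.mul, leg_neg_one hq]
  ring

lemma intPrime {q : ℕ} [Fact q.Prime] : Prime (q : ℤ) :=
  Nat.prime_iff_prime_int.mp Fact.out

lemma not_dvd_both {q : ℕ} [Fact q.Prime] {x y : ℤ} (hco : IsCoprime x y)
    (hx : (q : ℤ) ∣ x) (hy : (q : ℤ) ∣ y) : False :=
  intPrime.not_unit (hco.isUnit_of_dvd' hx hy)

lemma not_dvd_s {q : ℕ} [Fact q.Prime] {x y r t s u : ℤ} (hco : IsCoprime x y)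
    (hx : x = r * s ^ 2) (hy : y = t * u ^ 2) (ht : (q : ℤ) ∣ t) : ¬(q : ℤ) ∣ s := fun hs =>
  not_dvd_both hco (hx ▸ ((dvd_pow hs two_ne_zero).mul_left r)) (hy ▸ ht.mul_right _)

lemma not_dvd_u {q : ℕ} [Fact q.Prime] {x y r t s u : ℤ} (hco : IsCoprime x y)
    (hx : x = r * s ^ 2) (hy : y = t * u ^ 2) (hr : (q : ℤ) ∣ r) : ¬(q : ℤ) ∣ u := fun hu =>
  not_dvd_both hco (hx ▸ hr.mul_right _) (hy ▸ ((dvd_pow hu two_ne_zero).mul_left t))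

lemma split_core {x y m r t : ℤ} (hx : 0 < x) (hy : 0 < y) (hco : IsCoprime x y)
    (hrpos : 0 < r) (htpos : 0 < t) (hr : r ∣ x) (ht : t ∣ y)
    (hxy : x * y = r * t * m ^ 2) :
    ∃ s u : ℤ, x = r * s ^ 2 ∧ y = t * u ^ 2 ∧ m = s * u := by
  obtain ⟨X, rfl⟩ := hr
  obtain ⟨Y, rfl⟩ := ht
  have hrt0 : r * t ≠ 0 := (mul_pos hrpos htpos).ne'
  have hXY : X * Y = m ^ 2 := by
    apply mul_left_cancel₀ hrt0
    linear_combination hxy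
  have hXpos : 0 < X := by by_contra h; push_neg at h; nlinarith
  have hYpos : 0 < Y := by by_contra h; push_neg at h; nlinarith
  have hcoXY : IsCoprime X Y :=
    (hco.of_isCoprime_of_dvd_left (dvd_mul_left X r)).of_isCoprime_of_dvd_right (dvd_mul_left Y t)
  obtain ⟨s, hs⟩ := Int.sq_of_isCoprime hcoXY hXY
  obtain ⟨u, hu⟩ := Int.sq_of_isCoprime hcoXY.symm (by linarith [hXY] : Y * X = m ^ 2)
  have hX : X = s ^ 2 := by rcases hs with h | h; exacts [h, by nlinarith [sq_nonneg s]]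
  have hY : Y = u ^ 2 := by rcases hu with h | h; exacts [h, by nlinarith [sq_nonneg u]]
  have hm2 : m ^ 2 = (s * u) ^ 2 := by rw [← hXY, hX, hY]; ring
  have : (m - s * u) * (m + s * u) = 0 := by linear_combination hm2
  rcases mul_eq_zero.mp this with h | h
  · exact ⟨s, u, by rw [hX], by rw [hY], by linarith⟩
  · exact ⟨s, -u, by rw [hX], by rw [hY]; ring, by linarith⟩

lemma coprime_casts {p q : ℕ} [Fact p.Prime] [Fact q.Prime] (h : p ≠ q) :
    IsCoprime (p : ℤ) (q : ℤ) :=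
  Nat.isCoprime_iff_coprime.mpr ((Nat.coprime_primes Fact.out Fact.out).mpr h)

lemma split3 (p₁ p₂ p₃ : ℕ) [Fact p₁.Prime] [Fact p₂.Prime] [Fact p₃.Prime]
    (h12 : p₁ ≠ p₂) (h13 : p₁ ≠ p₃) (h23 : p₂ ≠ p₃)
    {x y m : ℤ} (hx : 0 < x) (hy : 0 < y) (hco : IsCoprime x y)
    (hxy : x * y = (p₁ : ℤ) * p₂ * p₃ * m ^ 2) :
    ∃ r t s u : ℤ, r * t = (p₁ : ℤ) * p₂ * p₃ ∧ x = r * s ^ 2 ∧ y = t * u ^ 2 ∧ m = s * u ∧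
      (r = 1 ∨ r = (p₁ : ℤ) ∨ r = (p₂ : ℤ) ∨ r = (p₃ : ℤ) ∨ r = (p₁ : ℤ) * p₂ ∨
        r = (p₁ : ℤ) * p₃ ∨ r = (p₂ : ℤ) * p₃ ∨ r = (p₁ : ℤ) * p₂ * p₃) := by
  have P1 : (0:ℤ) < p₁ := by exact_mod_cast (Fact.out : p₁.Prime).pos
  have P2 : (0:ℤ) < p₂ := by exact_mod_cast (Fact.out : p₂.Prime).pos
  have P3 : (0:ℤ) < p₃ := by exact_mod_cast (Fact.out : p₃.Prime).pos
  have hdvd : ∀ q : ℕ, Fact q.Prime → (q:ℤ) ∣ (p₁ : ℤ) * p₂ * p₃ → ((q:ℤ) ∣ x ∨ (q:ℤ) ∣ y) := by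
    intro q hq hd
    exact (Nat.prime_iff_prime_int.mp hq.out).dvd_mul.mp (hxy ▸ (hd.mul_right _))
  have H1 := hdvd p₁ ‹_› ⟨(p₂:ℤ)*p₃, by ring⟩
  have H2 := hdvd p₂ ‹_› ⟨(p₁:ℤ)*p₃, by ring⟩
  have H3 := hdvd p₃ ‹_› ⟨(p₁:ℤ)*p₂, by ring⟩
  have c12 := coprime_casts (p := p₁) (q := p₂) h12
  have c13 := coprime_casts (p := p₁) (q := p₃) h13
  have c23 := coprime_casts (p := p₂) (q := p₃) h23
  rcases H1 with d1 | d1 <;> rcases H2 with d2 | d2 <;> rcases H3 with d3 | d3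
  · obtain ⟨s, u, e1, e2, e3⟩ := split_core (m := m) hx hy hco (by positivity) one_pos
      ((c13.mul_left c23).mul_dvd (c12.mul_dvd d1 d2) d3) (one_dvd y)
      (by linear_combination hxy)
    exact ⟨_, _, s, u, by ring, e1, e2, e3, by tauto⟩
  · obtain ⟨s, u, e1, e2, e3⟩ := split_core (m := m) hx hy hco (by positivity) P3
      (c12.mul_dvd d1 d2) d3 (by linear_combination hxy)
    exact ⟨_, _, s, u, by ring, e1, e2, e3, by tauto⟩
  · obtain ⟨s, u, e1, e2, e3⟩ := split_core (m := m) hx hy hco (by positivity) P2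
      (c13.mul_dvd d1 d3) d2 (by linear_combination hxy)
    exact ⟨_, _, s, u, by ring, e1, e2, e3, by tauto⟩
  · obtain ⟨s, u, e1, e2, e3⟩ := split_core (m := m) hx hy hco P1 (by positivity)
      d1 (c23.mul_dvd d2 d3) (by linear_combination hxy)
    exact ⟨_, _, s, u, by ring, e1, e2, e3, by tauto⟩
  · obtain ⟨s, u, e1, e2, e3⟩ := split_core (m := m) hx hy hco (by positivity) P1
      (c23.mul_dvd d2 d3) d1 (by linear_combination hxy)
    exact ⟨_, _, s, u, by ring, e1, e2, e3, by tauto⟩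
  · obtain ⟨s, u, e1, e2, e3⟩ := split_core (m := m) hx hy hco P2 (by positivity)
      d2 (c13.mul_dvd d1 d3) (by linear_combination hxy)
    exact ⟨_, _, s, u, by ring, e1, e2, e3, by tauto⟩
  · obtain ⟨s, u, e1, e2, e3⟩ := split_core (m := m) hx hy hco P3 (by positivity)
      d3 (c12.mul_dvd d1 d2) (by linear_combination hxy)
    exact ⟨_, _, s, u, by ring, e1, e2, e3, by tauto⟩
  · obtain ⟨s, u, e1, e2, e3⟩ := split_core (m := m) hx hy hco one_pos (by positivity)
      (one_dvd x) ((c13.mul_left c23).mul_dvd (c12.mul_dvd d1 d2) d3)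
      (by linear_combination hxy)
    exact ⟨_, _, s, u, by ring, e1, e2, e3, by tauto⟩

lemma no_nontrivial (p₁ p₂ p₃ : ℕ) [Fact p₁.Prime] [Fact p₂.Prime] [Fact p₃.Prime]
    (hc₁ : p₁ % 8 = 7) (hc₂ : p₂ % 8 = 7) (hc₃ : p₃ % 8 = 7)
    (T12 : legendreSym p₁ (p₂ : ℤ) = -1) (T23 : legendreSym p₂ (p₃ : ℤ) = -1)
    (T31 : legendreSym p₃ (p₁ : ℤ) = -1)
    (T21 : legendreSym p₂ (p₁ : ℤ) = 1) (T32 : legendreSym p₃ (p₂ : ℤ) = 1)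
    (T13 : legendreSym p₁ (p₃ : ℤ) = 1)
    {x y r t s u c : ℤ} (hco : IsCoprime x y)
    (hx : x = r * s ^ 2) (hy : y = t * u ^ 2)
    (hrt : r * t = (p₁ : ℤ) * p₂ * p₃)
    (heq : r * s ^ 2 - t * u ^ 2 = c) (hc : c = 1 ∨ c = 2)
    (hcase : r = (p₁ : ℤ) ∨ r = (p₂ : ℤ) ∨ r = (p₃ : ℤ) ∨ r = (p₁ : ℤ) * p₂ ∨
      r = (p₁ : ℤ) * p₃ ∨ r = (p₂ : ℤ) * p₃ ∨ r = (p₁ : ℤ) * p₂ * p₃) :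
    False := by
  have P1 : ((p₁:ℤ)) ≠ 0 := by exact_mod_cast (Fact.out : p₁.Prime).pos.ne'
  have P2 : ((p₂:ℤ)) ≠ 0 := by exact_mod_cast (Fact.out : p₂.Prime).pos.ne'
  have P3 : ((p₃:ℤ)) ≠ 0 := by exact_mod_cast (Fact.out : p₃.Prime).pos.ne'
  rcases hcase with rfl | rfl | rfl | rfl | rfl | rfl | rfl
  · have ht' : t = (p₂ : ℤ) * p₃ := mul_left_cancel₀ P1 (by linear_combination hrt)
    have hd : (p₃ : ℤ) ∣ t := ⟨(p₂:ℤ), by rw [ht']; ring⟩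
    have := legA hc₃ heq hc hd (not_dvd_s hco hx hy hd)
    rw [T31] at this; norm_num at this
  · have ht' : t = (p₁ : ℤ) * p₃ := mul_left_cancel₀ P2 (by linear_combination hrt)
    have hd : (p₁ : ℤ) ∣ t := ⟨(p₃:ℤ), by rw [ht']⟩
    have := legA hc₁ heq hc hd (not_dvd_s hco hx hy hd)
    rw [T12] at this; norm_num at this
  · have ht' : t = (p₁ : ℤ) * p₂ := mul_left_cancel₀ P3 (by linear_combination hrt)
    have hd : (p₂ : ℤ) ∣ t := ⟨(p₁:ℤ), by rw [ht']; ring⟩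
    have := legA hc₂ heq hc hd (not_dvd_s hco hx hy hd)
    rw [T23] at this; norm_num at this
  · have ht' : t = (p₃ : ℤ) := mul_left_cancel₀ (mul_ne_zero P1 P2) (by linear_combination hrt)
    have hd : (p₃ : ℤ) ∣ t := ht' ▸ dvd_rfl
    have := legA hc₃ heq hc hd (not_dvd_s hco hx hy hd)
    rw [legendreSym.mul, T31, T32] at this; norm_num at this
  · have ht' : t = (p₂ : ℤ) := mul_left_cancel₀ (mul_ne_zero P1 P3) (by linear_combination hrt)
    have hd : (p₂ : ℤ) ∣ t := ht' ▸ dvd_rfl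
    have := legA hc₂ heq hc hd (not_dvd_s hco hx hy hd)
    rw [legendreSym.mul, T21, T23] at this; norm_num at this
  · have ht' : t = (p₁ : ℤ) := mul_left_cancel₀ (mul_ne_zero P2 P3)
      (show (p₂:ℤ) * p₃ * t = (p₂:ℤ) * p₃ * p₁ by linear_combination hrt)
    have hd : (p₁ : ℤ) ∣ t := ht' ▸ dvd_rfl
    have := legA hc₁ heq hc hd (not_dvd_s hco hx hy hd)
    rw [legendreSym.mul, T12, T13] at this; norm_num at this
  · have ht' : t = 1 := mul_left_cancel₀ (mul_ne_zero (mul_ne_zero P1 P2) P3)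
      (by linear_combination hrt)
    have hd : (p₁ : ℤ) ∣ (p₁ : ℤ) * p₂ * p₃ := ⟨(p₂:ℤ) * p₃, by ring⟩
    have := legB hc₁ heq hc hd (not_dvd_u hco hx hy hd)
    rw [ht', leg_neg_one hc₁] at this; norm_num at this

end Pell8Aux

open Pell8Aux in
/-- decomposition of the fundamental solution of
`x² − p₁p₂p₃·y² = 1` for distinct primes `p₁, p₂, p₃ ≡ 7 (mod 8)` with
`(−p₁/p₂) = (−p₂/p₃) = −1` and `(−p₁/p₃) = 1`. -/
theorem stmt_8 (p₁ p₂ p₃ : ℕ)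
    [hp₁ : Fact p₁.Prime] [hp₂ : Fact p₂.Prime] [hp₃ : Fact p₃.Prime]
    (hd₁₂ : p₁ ≠ p₂) (hd₁₃ : p₁ ≠ p₃) (hd₂₃ : p₂ ≠ p₃)
    (hc₁ : p₁ % 8 = 7) (hc₂ : p₂ % 8 = 7) (hc₃ : p₃ % 8 = 7)
    (h₁ : legendreSym p₂ (-(p₁ : ℤ)) = -1)
    (h₂ : legendreSym p₃ (-(p₂ : ℤ)) = -1)
    (h₃ : legendreSym p₃ (-(p₁ : ℤ)) = 1)
    (a b : ℤ)
    (hab : IsFundamentalPellSolution (p₁ * p₂ * p₃) a b) :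
    ∃ b₁ b₂ : ℤ, b = b₁ * b₂ ∧ a + 1 = b₁ ^ 2 ∧
      a - 1 = p₁ * p₂ * p₃ * b₂ ^ 2 ∧
      b₁ ^ 2 - p₁ * p₂ * p₃ * b₂ ^ 2 = 2 ∧
      2 * ((a : ℝ) + (b : ℝ) * Real.sqrt (p₁ * p₂ * p₃)) =
        ((b₁ : ℝ) + (b₂ : ℝ) * Real.sqrt (p₁ * p₂ * p₃)) ^ 2 := by
  obtain ⟨ha, hb, heq, hmin⟩ := hab
  have P1 : (0:ℤ) < p₁ := by exact_mod_cast (Fact.out : p₁.Prime).pos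
  have P2 : (0:ℤ) < p₂ := by exact_mod_cast (Fact.out : p₂.Prime).pos
  have P3 : (0:ℤ) < p₃ := by exact_mod_cast (Fact.out : p₃.Prime).pos
  have hD : (0:ℤ) < (p₁:ℤ) * p₂ * p₃ := by positivity
  have ha2 : 2 ≤ a := by
    by_contra h
    push_neg at h
    have ha1 : a = 1 := by omega
    rw [ha1] at heq
    have hposs : 0 < ((p₁:ℤ) * p₂ * p₃) * b ^ 2 := mul_pos hD (pow_pos hb 2)
    have hz : ((p₁:ℤ) * p₂ * p₃) * b ^ 2 = 0 := by linear_combination -heq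
    exact lt_irrefl _ (hz ▸ hposs)
  -- the Legendre symbol table
  have T21 : legendreSym p₂ (p₁:ℤ) = 1 := by
    have h := leg_neg (p := p₁) (q := p₂) hc₂; linarith only [h, h₁]
  have T12 : legendreSym p₁ (p₂:ℤ) = -1 := by
    have h := leg_flip (p := p₂) (q := p₁) hc₂ hc₁; linarith only [h, T21]
  have T32 : legendreSym p₃ (p₂:ℤ) = 1 := by
    have h := leg_neg (p := p₂) (q := p₃) hc₃; linarith only [h, h₂]
  have T23 : legendreSym p₂ (p₃:ℤ) = -1 := by
    have h := leg_flip (p := p₃) (q := p₂) hc₃ hc₂; linarith only [h, T32]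
  have T31 : legendreSym p₃ (p₁:ℤ) = -1 := by
    have h := leg_neg (p := p₁) (q := p₃) hc₃; linarith only [h, h₃]
  have T13 : legendreSym p₁ (p₃:ℤ) = 1 := by
    have h := leg_flip (p := p₃) (q := p₁) hc₃ hc₁; linarith only [h, T31]
  rcases Int.even_or_odd a with he | ho
  · -- a even : the conclusion case
    obtain ⟨k, hk⟩ := he
    have hx : (0:ℤ) < a + 1 := by omega
    have hy : (0:ℤ) < a - 1 := by omega
    have hco : IsCoprime (a + 1) (a - 1) := by
      rw [Int.isCoprime_iff_gcd_eq_one]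
      have h1 : ((a+1).gcd (a-1) : ℤ) ∣ a + 1 := Int.gcd_dvd_left _ _
      have h2 : ((a+1).gcd (a-1) : ℤ) ∣ a - 1 := Int.gcd_dvd_right _ _
      have h3 : ((a+1).gcd (a-1) : ℤ) ∣ 2 := by
        have := dvd_sub h1 h2
        simpa using this
      have h4 : (a+1).gcd (a-1) ∣ 2 := by exact_mod_cast h3
      rcases (Nat.dvd_prime Nat.prime_two).mp h4 with h | h
      · exact h
      · exfalso
        rw [h] at h1
        obtain ⟨c, hc⟩ := h1
        omega
    have hxy : (a + 1) * (a - 1) = (p₁:ℤ) * p₂ * p₃ * b ^ 2 := by linear_combination heq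
    obtain ⟨r, t, s, u, hrt, hxe, hye, hm, hcase⟩ :=
      split3 p₁ p₂ p₃ hd₁₂ hd₁₃ hd₂₃ hx hy hco hxy
    have hequ : r * s ^ 2 - t * u ^ 2 = 2 := by linear_combination hye - hxe
    rcases hcase with h1 | hcase
    · -- r = 1
      have ht' : t = (p₁:ℤ) * p₂ * p₃ := by rw [h1, one_mul] at hrt; exact hrt
      have hxe' : a + 1 = s ^ 2 := by rw [h1, one_mul] at hxe; exact hxe
      have hye' : a - 1 = (p₁:ℤ) * p₂ * p₃ * u ^ 2 := by rw [ht'] at hye; exact hye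
      refine ⟨s, u, hm, hxe', hye', by linear_combination hye' - hxe', ?_⟩
      have hsq : Real.sqrt ((p₁:ℝ) * p₂ * p₃) ^ 2 = (p₁:ℝ) * p₂ * p₃ :=
        Real.sq_sqrt (by positivity)
      have c1 : (a:ℝ) + 1 = (s:ℝ) ^ 2 := by exact_mod_cast hxe'
      have c2 : (a:ℝ) - 1 = ((p₁:ℝ) * p₂ * p₃) * (u:ℝ) ^ 2 := by exact_mod_cast hye'
      have c3 : (b:ℝ) = (s:ℝ) * u := by exact_mod_cast hm
      linear_combination c1 + c2 + 2 * Real.sqrt ((p₁:ℝ) * p₂ * p₃) * c3 - (u:ℝ) ^ 2 * hsq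
    · exact (no_nontrivial p₁ p₂ p₃ hc₁ hc₂ hc₃ T12 T23 T31 T21 T32 T13 hco hxe hye hrt hequ
        (Or.inr rfl) hcase).elim
  · -- a odd : contradiction
    exfalso
    obtain ⟨k, hk⟩ := ho
    have hbeven : (2:ℤ) ∣ b := by
      have h2 : (2:ℤ) ∣ (p₁:ℤ) * p₂ * p₃ * b ^ 2 :=
        ⟨2 * k ^ 2 + 2 * k, by linear_combination -heq + (a + 2 * k + 1) * hk⟩
      have hD2 : ¬ (2:ℤ) ∣ (p₁:ℤ) * p₂ * p₃ := by
        intro h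
        have hn : 2 ∣ p₁ * p₂ * p₃ := by exact_mod_cast (by push_cast; exact h : ((2:ℕ):ℤ) ∣ ((p₁ * p₂ * p₃ : ℕ) : ℤ))
        rcases (Nat.Prime.dvd_mul Nat.prime_two).mp hn with h' | h'
        · rcases (Nat.Prime.dvd_mul Nat.prime_two).mp h' with h'' | h'' <;> omega
        · omega
      rcases (Int.prime_two.dvd_mul).mp h2 with h | h
      · exact absurd h hD2
      · exact Int.prime_two.dvd_of_dvd_pow h
    obtain ⟨β, hβ⟩ := hbeven
    have hk1 : (1:ℤ) ≤ k := by omega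
    have hxc : (0:ℤ) < k + 1 := by omega
    have hyc : (0:ℤ) < k := by omega
    have hcok : IsCoprime (k + 1) k := ⟨1, -1, by ring⟩
    have hxyk : (k + 1) * k = (p₁:ℤ) * p₂ * p₃ * β ^ 2 := by
      have h4 : (4:ℤ) * ((k + 1) * k) = 4 * ((p₁:ℤ) * p₂ * p₃ * β ^ 2) := by
        linear_combination heq - (a + 2 * k + 1) * hk + ((p₁:ℤ) * p₂ * p₃) * (b + 2 * β) * hβ
      exact mul_left_cancel₀ (by norm_num : (4:ℤ) ≠ 0) h4
    obtain ⟨r, t, s, u, hrt, hxe, hye, hm, hcase⟩ :=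
      split3 p₁ p₂ p₃ hd₁₂ hd₁₃ hd₂₃ hxc hyc hcok hxyk
    have hequ : r * s ^ 2 - t * u ^ 2 = 1 := by linear_combination hye - hxe
    rcases hcase with h1 | hcase
    · -- r = 1 : contradicts minimality
      have ht' : t = (p₁:ℤ) * p₂ * p₃ := by rw [h1, one_mul] at hrt; exact hrt
      have hxe' : k + 1 = s ^ 2 := by rw [h1, one_mul] at hxe; exact hxe
      have hye' : k = (p₁:ℤ) * p₂ * p₃ * u ^ 2 := by rw [ht'] at hye; exact hye
      have hu0 : u ≠ 0 := by
        intro h; rw [h] at hye'; norm_num at hye'; omega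
      have hs0 : s ≠ 0 := by
        intro h; rw [h] at hxe'; norm_num at hxe'; omega
      have hle := hmin |s| |u| (abs_pos.mpr hs0) (abs_pos.mpr hu0)
        (by rw [sq_abs, sq_abs]; linear_combination hye' - hxe')
      have h2 : a ^ 2 ≤ |s| ^ 2 := pow_le_pow_left₀ (le_of_lt ha) hle 2
      rw [sq_abs, ← hxe', hk] at h2
      have h6 : k ≤ k ^ 2 := le_self_pow₀ hk1 two_ne_zero
      ring_nf at h2
      linarith only [h2, h6, hk1]
    · exact no_nontrivial p₁ p₂ p₃ hc₁ hc₂ hc₃ T12 T23 T31 T21 T32 T13 hcok hxe hye hrt hequ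
        (Or.inl rfl) hcase
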